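/- In the call-by-name restriction λμμ̃T (where only covalues E ::= α | v·E | case-sum may be substituted for covariables), the full η law for sum types is unsound: combining the rule η⊕ (case{inl x ⇒ ⟨inl x ‖ e⟩ | inr y ⇒ ⟨inr y ‖ e⟩} → e when the bound variables are not free in e) with the call-by-name β rules breaks confluence. Concretely, for commands c₀, c₁ and unused δ, z, the command ⟨μδ.c₀ ‖ case{inl x ⇒ ⟨inl x ‖ μ̃z.c₁⟩ | inr y ⇒ ⟨inr y ‖ μ̃z.c₁⟩}⟩ reduces to c₀ by βμ-CBN and also reduces (via η⊕ followed by βμ̃-CBN) to c₁. -/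
import Mathlib


/-!  The λμμ̃-calculus (Curien–Herbelin sequent calculus) with sums,
     named (co)variables represented by natural numbers. -/

namespace LMM

mutual
  /-- Terms (producers). -/
  inductive Tm : Type
  | var : Nat → Tm                      -- x
  | mu  : Nat → Cmd → Tm                -- μα.c
  | lam : Nat → Nat → Cmd → Tm          -- λ(x·α).c
  | inl : Tm → Tm
  | inr : Tm → Tm

  /-- Coterms (consumers). -/
  inductive CoTm : Type
  | covar : Nat → CoTm                  -- α
  | mut : Nat → Cmd → CoTm              -- μ̃x.c
  | app : Tm → CoTm → CoTm              -- v·e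
  | caseSum : Nat → Cmd → Nat → Cmd → CoTm  -- case{inl x ⇒ c₁ | inr y ⇒ c₂}

  /-- Commands. -/
  inductive Cmd : Type
  | cut : Tm → CoTm → Cmd               -- ⟨v ‖ e⟩
end

mutual
  /-- Substitution of a term for a (term) variable in a term. -/
  def substVTm : Tm → Nat → Tm → Tm
  | .var y, x, v => if y = x then v else .var y
  | .mu a c, x, v => .mu a (substVCmd c x v)
  | .lam y a c, x, v => if y = x then .lam y a c else .lam y a (substVCmd c x v)
  | .inl t, x, v => .inl (substVTm t x v)
  | .inr t, x, v => .inr (substVTm t x v)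

  def substVCo : CoTm → Nat → Tm → CoTm
  | .covar b, _, _ => .covar b
  | .mut y c, x, v => if y = x then .mut y c else .mut y (substVCmd c x v)
  | .app t e, x, v => .app (substVTm t x v) (substVCo e x v)
  | .caseSum y c1 z c2, x, v =>
      .caseSum y (if y = x then c1 else substVCmd c1 x v)
               z (if z = x then c2 else substVCmd c2 x v)

  def substVCmd : Cmd → Nat → Tm → Cmd
  | .cut t e, x, v => .cut (substVTm t x v) (substVCo e x v)
end

mutual
  /-- Substitution of a coterm for a covariable in a term. -/
  def substETm : Tm → Nat → CoTm → Tm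
  | .var y, _, _ => .var y
  | .mu b c, a, e => if b = a then .mu b c else .mu b (substECmd c a e)
  | .lam y b c, a, e => if b = a then .lam y b c else .lam y b (substECmd c a e)
  | .inl t, a, e => .inl (substETm t a e)
  | .inr t, a, e => .inr (substETm t a e)

  def substECo : CoTm → Nat → CoTm → CoTm
  | .covar b, a, e => if b = a then e else .covar b
  | .mut y c, a, e => .mut y (substECmd c a e)
  | .app t e', a, e => .app (substETm t a e) (substECo e' a e)
  | .caseSum y c1 z c2, a, e => .caseSum y (substECmd c1 a e) z (substECmd c2 a e)

  def substECmd : Cmd → Nat → CoTm → Cmd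
  | .cut t e', a, e => .cut (substETm t a e) (substECo e' a e)
end

mutual
  /-- Free (term) variables. -/
  def fvTm : Tm → List Nat
  | .var y => [y]
  | .mu _ c => fvCmd c
  | .lam y _ c => (fvCmd c).filter (· ≠ y)
  | .inl t => fvTm t
  | .inr t => fvTm t

  def fvCo : CoTm → List Nat
  | .covar _ => []
  | .mut y c => (fvCmd c).filter (· ≠ y)
  | .app t e => fvTm t ++ fvCo e
  | .caseSum y c1 z c2 => (fvCmd c1).filter (· ≠ y) ++ (fvCmd c2).filter (· ≠ z)

  def fvCmd : Cmd → List Nat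
  | .cut t e => fvTm t ++ fvCo e
end

mutual
  /-- Free covariables. -/
  def fcvTm : Tm → List Nat
  | .var _ => []
  | .mu b c => (fcvCmd c).filter (· ≠ b)
  | .lam _ b c => (fcvCmd c).filter (· ≠ b)
  | .inl t => fcvTm t
  | .inr t => fcvTm t

  def fcvCo : CoTm → List Nat
  | .covar b => [b]
  | .mut _ c => fcvCmd c
  | .app t e => fcvTm t ++ fcvCo e
  | .caseSum _ c1 _ c2 => fcvCmd c1 ++ fcvCmd c2

  def fcvCmd : Cmd → List Nat
  | .cut t e => fcvTm t ++ fcvCo e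
end

end LMM

namespace LMM

/-- Covalues of the call-by-name sub-calculus λμμ̃T:
    E ::= α | v·E | case{inl x ⇒ c₁ | inr y ⇒ c₂}. -/
inductive IsCoval : CoTm → Prop
| covar (a : Nat) : IsCoval (.covar a)
| app (v : Tm) {e : CoTm} : IsCoval e → IsCoval (.app v e)
| caseSum (x : Nat) (c₁ : Cmd) (y : Nat) (c₂ : Cmd) : IsCoval (.caseSum x c₁ y c₂)

/-- Reduction of the call-by-name calculus λμμ̃T extended with the full η law
    for sums:
    * βμ-CBN:  ⟨μα.c ‖ E⟩ → c[E/α]   (only for covalues E),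
    * βμ̃-CBN:  ⟨v ‖ μ̃x.c⟩ → c[v/x]  (any term v),
    * β→-CBN, β⊕-CBN,
    * η⊕: case{inl x ⇒ ⟨inl x ‖ e⟩ | inr y ⇒ ⟨inr y ‖ e⟩} → e  when x,y ∉ FV(e). -/
inductive RedT : Cmd → Cmd → Prop
| betaMu {e : CoTm} (a : Nat) (c : Cmd) :
    IsCoval e → RedT (.cut (.mu a c) e) (substECmd c a e)
| betaMut (v : Tm) (x : Nat) (c : Cmd) :
    RedT (.cut v (.mut x c)) (substVCmd c x v)
| betaArrow {E : CoTm} (x a : Nat) (c : Cmd) (v : Tm) :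
    IsCoval E →
    RedT (.cut (.lam x a c) (.app v E)) (substECmd (substVCmd c x v) a E)
| betaSumL (v : Tm) (x y : Nat) (c₁ c₂ : Cmd) :
    RedT (.cut (.inl v) (.caseSum x c₁ y c₂)) (substVCmd c₁ x v)
| betaSumR (v : Tm) (x y : Nat) (c₁ c₂ : Cmd) :
    RedT (.cut (.inr v) (.caseSum x c₁ y c₂)) (substVCmd c₂ y v)
| etaSum {e : CoTm} (v : Tm) (x y : Nat) :
    x ∉ fvCo e → y ∉ fvCo e →
    RedT (.cut v (.caseSum x (.cut (.inl (.var x)) e) y (.cut (.inr (.var y)) e)))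
         (.cut v e)

mutual
theorem substETm_id (t : Tm) (a : Nat) (e : CoTm) (h : a ∉ fcvTm t) :
    substETm t a e = t := by
  match t with
  | .var y => rfl
  | .mu b c =>
    simp only [substETm]
    by_cases hb : b = a
    · simp [hb]
    · simp only [hb, if_false]
      have : a ∉ fcvCmd c := by
        intro hc
        exact h (by simpa [fcvTm, List.mem_filter, Ne.symm hb] using hc)
      rw [substECmd_id c a e this]
  | .lam y b c =>
    simp only [substETm]
    by_cases hb : b = a
    · simp [hb]
    · simp only [hb, if_false]
      have : a ∉ fcvCmd c := by
        intro hc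
        exact h (by simpa [fcvTm, List.mem_filter, Ne.symm hb] using hc)
      rw [substECmd_id c a e this]
  | .inl t' =>
    simp only [substETm]
    rw [substETm_id t' a e (by simpa [fcvTm] using h)]
  | .inr t' =>
    simp only [substETm]
    rw [substETm_id t' a e (by simpa [fcvTm] using h)]

theorem substECo_id (e' : CoTm) (a : Nat) (e : CoTm) (h : a ∉ fcvCo e') :
    substECo e' a e = e' := by
  match e' with
  | .covar b =>
    have : b ≠ a := by intro hb; exact h (by simp [fcvCo, hb])
    simp [substECo, this]
  | .mut y c =>
    simp only [substECo]
    rw [substECmd_id c a e (by simpa [fcvCo] using h)]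
  | .app t e2 =>
    simp only [fcvCo, List.mem_append, not_or] at h
    simp only [substECo]
    rw [substETm_id t a e h.1, substECo_id e2 a e h.2]
  | .caseSum y c1 z c2 =>
    simp only [fcvCo, List.mem_append, not_or] at h
    simp only [substECo]
    rw [substECmd_id c1 a e h.1, substECmd_id c2 a e h.2]

theorem substECmd_id (c : Cmd) (a : Nat) (e : CoTm) (h : a ∉ fcvCmd c) :
    substECmd c a e = c := by
  match c with
  | .cut t e' =>
    simp only [fcvCmd, List.mem_append, not_or] at h
    simp only [substECmd]
    rw [substETm_id t a e h.1, substECo_id e' a e h.2]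
end

mutual
theorem substVTm_id (t : Tm) (x : Nat) (v : Tm) (h : x ∉ fvTm t) :
    substVTm t x v = t := by
  match t with
  | .var y =>
    have : y ≠ x := by intro hy; exact h (by simp [fvTm, hy])
    simp [substVTm, this]
  | .mu b c =>
    simp only [substVTm]
    rw [substVCmd_id c x v (by simpa [fvTm] using h)]
  | .lam y b c =>
    simp only [substVTm]
    by_cases hy : y = x
    · simp [hy]
    · simp only [hy, if_false]
      have : x ∉ fvCmd c := by
        intro hc
        exact h (by simpa [fvTm, List.mem_filter, Ne.symm hy] using hc)
      rw [substVCmd_id c x v this]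
  | .inl t' =>
    simp only [substVTm]
    rw [substVTm_id t' x v (by simpa [fvTm] using h)]
  | .inr t' =>
    simp only [substVTm]
    rw [substVTm_id t' x v (by simpa [fvTm] using h)]

theorem substVCo_id (e : CoTm) (x : Nat) (v : Tm) (h : x ∉ fvCo e) :
    substVCo e x v = e := by
  match e with
  | .covar b => rfl
  | .mut y c =>
    simp only [substVCo]
    by_cases hy : y = x
    · simp [hy]
    · simp only [hy, if_false]
      have : x ∉ fvCmd c := by
        intro hc
        exact h (by simpa [fvCo, List.mem_filter, Ne.symm hy] using hc)
      rw [substVCmd_id c x v this]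
  | .app t e2 =>
    simp only [fvCo, List.mem_append, not_or] at h
    simp only [substVCo]
    rw [substVTm_id t x v h.1, substVCo_id e2 x v h.2]
  | .caseSum y c1 z c2 =>
    simp only [fvCo, List.mem_append, not_or] at h
    simp only [substVCo]
    by_cases hy : y = x
    · by_cases hz : z = x
      · simp [hy, hz]
      · simp only [hy, hz, if_true, if_false]
        rw [substVCmd_id c2 x v (by
          intro hc; exact h.2 (by simp [List.mem_filter, hc, Ne.symm hz]))]
    · by_cases hz : z = x
      · simp only [hy, hz, if_true, if_false]
        rw [substVCmd_id c1 x v (by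
          intro hc; exact h.1 (by simp [List.mem_filter, hc, Ne.symm hy]))]
      · simp only [hy, hz, if_false]
        rw [substVCmd_id c1 x v (by
          intro hc; exact h.1 (by simp [List.mem_filter, hc, Ne.symm hy])),
          substVCmd_id c2 x v (by
          intro hc; exact h.2 (by simp [List.mem_filter, hc, Ne.symm hz]))]

theorem substVCmd_id (c : Cmd) (x : Nat) (v : Tm) (h : x ∉ fvCmd c) :
    substVCmd c x v = c := by
  match c with
  | .cut t e =>
    simp only [fvCmd, List.mem_append, not_or] at h
    simp only [substVCmd]
    rw [substVTm_id t x v h.1, substVCo_id e x v h.2]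
end

/-- in call-by-name λμμ̃T the full η law for sums is unsound:
    for any commands c₀, c₁ with δ, z unused (and the case variables x, y not
    free in c₁), the command
    ⟨μδ.c₀ ‖ case{inl x ⇒ ⟨inl x ‖ μ̃z.c₁⟩ | inr y ⇒ ⟨inr y ‖ μ̃z.c₁⟩}⟩
    reduces to c₀ by βμ-CBN and also reduces, via η⊕ followed by βμ̃-CBN, to c₁. -/
theorem lmmT_eta_sum_unsound :
    ∀ (c₀ c₁ : Cmd) (x y z d : Nat),
      d ∉ fcvCmd c₀ → z ∉ fvCmd c₁ → x ∉ fvCmd c₁ → y ∉ fvCmd c₁ →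
      RedT (.cut (.mu d c₀)
              (.caseSum x (.cut (.inl (.var x)) (.mut z c₁))
                        y (.cut (.inr (.var y)) (.mut z c₁)))) c₀ ∧
      Relation.ReflTransGen RedT
        (.cut (.mu d c₀)
            (.caseSum x (.cut (.inl (.var x)) (.mut z c₁))
                      y (.cut (.inr (.var y)) (.mut z c₁)))) c₁ := by
  intro c₀ c₁ x y z d hd hz hx hy
  have hxe : x ∉ fvCo (CoTm.mut z c₁) := by
    intro h; simp only [fvCo, List.mem_filter] at h; exact hx h.1
  have hye : y ∉ fvCo (CoTm.mut z c₁) := by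
    intro h; simp only [fvCo, List.mem_filter] at h; exact hy h.1
  constructor
  · have := RedT.betaMu (e := CoTm.caseSum x (.cut (.inl (.var x)) (.mut z c₁))
        y (.cut (.inr (.var y)) (.mut z c₁))) d c₀ (IsCoval.caseSum _ _ _ _)
    rwa [substECmd_id c₀ d _ hd] at this
  · refine Relation.ReflTransGen.head (RedT.etaSum (.mu d c₀) x y hxe hye) ?_
    refine Relation.ReflTransGen.single ?_
    have := RedT.betaMut (.mu d c₀) z c₁
    rwa [substVCmd_id c₁ z _ hz] at this

end LMM
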